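/- Let λ, α ∈ ℂ \ {0} and define operators on ℂ[s,t]: E_0(g)(s,t) = α·g(s, t−2) and E_1(g)(s,t) = λ·α·g(s−1, t−2). Then for every polynomial g(t) ∈ ℂ[t] and every natural number k ≥ 1: (λ E_0)^k(s·g(t)) = (λα)^k·s·g(t−2k) and E_1^k(s·g(t)) = (λα)^k·(s−k)·g(t−2k); consequently g(t−2k) = (1/(k(λα)^k))·((λE_0)^k(s·g(t)) − E_1^k(s·g(t))). -/

import Mathlib

open MvPolynomial

abbrev R2 : Type := MvPolynomial (Fin 2) ℂ

/-- Substitution `g(s,t) ↦ g(s - u, t + v)`. -/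
noncomputable def sh (u v : ℂ) : R2 →ₐ[ℂ] R2 := aeval ![X 0 - C u, X 1 + C v]

/-- The embedding `ℂ[t] → ℂ[s,t]`, sending the variable to `t = X 1`. -/
noncomputable def embT (p : Polynomial ℂ) : R2 := Polynomial.aeval (X 1 : R2) p

/-- Action of `e_0` in `Ω(λ,α,β,γ)`: `g(s,t) ↦ α g(s, t-2)`. -/
noncomputable def E0 (a : ℂ) (g : R2) : R2 := C a * sh 0 (-2) g

/-- Action of `e_1` in `Ω(λ,α,β,γ)`: `g(s,t) ↦ λ α g(s-1, t-2)`. -/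
noncomputable def E1 (lam a : ℂ) (g : R2) : R2 := C (lam * a) * sh 1 (-2) g

lemma sh_X0 (u v : ℂ) : sh u v (X 0) = X 0 - C u := by simp [sh]

lemma sh_X1 (u v : ℂ) : sh u v (X 1) = X 1 + C v := by simp [sh]

lemma sh_C (u v c : ℂ) : sh u v (C c : R2) = C c := by
  simp [sh, algebraMap_eq]

lemma sh_embT (u v : ℂ) (g : Polynomial ℂ) :
    sh u v (embT g) = embT (g.comp (Polynomial.X + Polynomial.C v)) := by
  unfold embT
  rw [Polynomial.aeval_comp, ← Polynomial.aeval_algHom_apply, sh_X1]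
  simp [algebraMap_eq]

lemma comp_shift (g : Polynomial ℂ) (c : ℂ) :
    (g.comp (Polynomial.X - Polynomial.C c)).comp (Polynomial.X + Polynomial.C (-2))
      = g.comp (Polynomial.X - Polynomial.C (c + 2)) := by
  rw [Polynomial.comp_assoc]
  congr 1
  simp [Polynomial.sub_comp]
  ring

theorem stmt4 (lam a : ℂ) (hlam : lam ≠ 0) (ha : a ≠ 0)
    (g : Polynomial ℂ) (k : ℕ) (hk : 1 ≤ k) :
    (fun x : R2 => C lam * E0 a x)^[k] (X 0 * embT g)
        = C ((lam * a) ^ k) * X 0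
            * embT (g.comp (Polynomial.X - Polynomial.C (2 * (k : ℂ)))) ∧
    (E1 lam a)^[k] (X 0 * embT g)
        = C ((lam * a) ^ k) * (X 0 - C (k : ℂ))
            * embT (g.comp (Polynomial.X - Polynomial.C (2 * (k : ℂ)))) ∧
    embT (g.comp (Polynomial.X - Polynomial.C (2 * (k : ℂ))))
        = C (1 / ((k : ℂ) * (lam * a) ^ k))
            * ((fun x : R2 => C lam * E0 a x)^[k] (X 0 * embT g)
                - (E1 lam a)^[k] (X 0 * embT g)) := by
  have h0 : ∀ n : ℕ, (fun x : R2 => C lam * E0 a x)^[n] (X 0 * embT g)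
        = C ((lam * a) ^ n) * X 0
            * embT (g.comp (Polynomial.X - Polynomial.C (2 * (n : ℂ)))) := by
    intro n
    induction n with
    | zero => simp
    | succ n ih =>
      rw [Function.iterate_succ_apply', ih]
      show C lam * E0 a _ = _
      rw [show (((n+1:ℕ)):ℂ) = (n:ℂ) + 1 by push_cast; ring,
        show (2:ℂ) * ((n:ℂ) + 1) = 2 * (n:ℂ) + 2 by ring, ← comp_shift]
      unfold E0
      rw [map_mul (sh 0 (-2)), map_mul (sh 0 (-2)), sh_C, sh_X0, sh_embT]
      simp only [map_zero, sub_zero, map_pow, map_mul]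
      ring
  have h1 : ∀ n : ℕ, (E1 lam a)^[n] (X 0 * embT g)
        = C ((lam * a) ^ n) * (X 0 - C (n : ℂ))
            * embT (g.comp (Polynomial.X - Polynomial.C (2 * (n : ℂ)))) := by
    intro n
    induction n with
    | zero => simp
    | succ n ih =>
      rw [Function.iterate_succ_apply', ih]
      show C (lam * a) * sh 1 (-2) _ = _
      rw [show (((n+1:ℕ)):ℂ) = (n:ℂ) + 1 by push_cast; ring,
        show (2:ℂ) * ((n:ℂ) + 1) = 2 * (n:ℂ) + 2 by ring, ← comp_shift]
      rw [map_mul (sh 1 (-2)), map_mul (sh 1 (-2)), map_sub (sh 1 (-2)),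
        sh_C, sh_C, sh_X0, sh_embT]
      simp only [map_pow, map_mul, map_add, map_one]
      ring
  refine ⟨h0 k, h1 k, ?_⟩
  rw [h0 k, h1 k]
  have hk0 : (k : ℂ) ≠ 0 := Nat.cast_ne_zero.mpr (by omega)
  have hla : ((lam * a) ^ k : ℂ) ≠ 0 := pow_ne_zero _ (mul_ne_zero hlam ha)
  have hc : (C ((1:ℂ) / ((k:ℂ) * (lam*a)^k)) : R2) * C ((lam*a)^k) * C ((k:ℂ)) = 1 := by
    rw [← map_mul, ← map_mul, ← C_1]
    congr 1
    field_simp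
  linear_combination (-embT (g.comp (Polynomial.X - Polynomial.C (2 * (k : ℂ))))) * hc
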